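/- Let ȳ ∈ (0,∞], let m be a monotone measure on (X,𝒜), and let ⋆ : [0,ȳ]² → [0,ȳ] be nondecreasing and left-continuous with a ⋆ b ≤ min(a,b) for all a,b. Let φ₁ : [0,ȳ] → [0,ȳ] be nondecreasing and φ₂, φ₃ : [0,ȳ] → [0,ȳ] be increasing and right-continuous with φ₁(ȳ) = φ₂(ȳ) = φ₃(ȳ); let ψᵢ : [0,φᵢ(ȳ)] → [0,ȳ] be nondecreasing for i=1,2,3 with ψ₂, ψ₃ left-continuous, ψ₁ ≥ ψ₂ and ψ₁ ≥ ψ₃ pointwise, and ψⱼ(φⱼ(x)) ≤ x ≤ ψ₁(φ₁(x)) for all x ∈ [0,ȳ] and j=2,3. Then for every A ∈ 𝒜 and all f,g ∈ F^ȳ comonotone on A: ψ₁(I_{∧,A}(φ₁(f⋆g))) ≥ ψ₂(I_{∧,A}(φ₂(f))) ⋆ ψ₃(I_{∧,A}(φ₃(g))). -/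

import Mathlib

open Set ENNReal

noncomputable def uSugeno {X : Type*} (ybar : ℝ≥0∞) (op : ℝ≥0∞ → ℝ≥0∞ → ℝ≥0∞)
    (m : Set X → ℝ≥0∞) (D : Set X) (f : X → ℝ≥0∞) : ℝ≥0∞ :=
  ⨆ t ∈ Set.Iic ybar, op t (m (D ∩ {x | t ≤ f x}))

noncomputable def qInt {X : Type*} (oti : ℝ≥0∞ → ℝ≥0∞ → ℝ≥0∞)
    (m : Set X → ℝ≥0∞) (f : X → ℝ≥0∞) : ℝ≥0∞ :=
  ⨆ t ∈ Set.Iic (1 : ℝ≥0∞), oti (m {x | t ≤ f x}) t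

def Mono2On (op : ℝ≥0∞ → ℝ≥0∞ → ℝ≥0∞) (s t : Set ℝ≥0∞) : Prop :=
  ∀ ⦃a₁⦄, a₁ ∈ s → ∀ ⦃b₁⦄, b₁ ∈ t → ∀ ⦃a₂⦄, a₂ ∈ s → ∀ ⦃b₂⦄, b₂ ∈ t →
    a₁ ≤ a₂ → b₁ ≤ b₂ → op a₁ b₁ ≤ op a₂ b₂

def LeftContOn (g : ℝ≥0∞ → ℝ≥0∞) (s : Set ℝ≥0∞) : Prop :=
  ∀ x ∈ s, ContinuousWithinAt g (Set.Iic x) x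

def RightContOn (g : ℝ≥0∞ → ℝ≥0∞) (s : Set ℝ≥0∞) : Prop :=
  ∀ x ∈ s, ContinuousWithinAt g (Set.Ici x) x

def LeftCont2On (op : ℝ≥0∞ → ℝ≥0∞ → ℝ≥0∞) (s t : Set ℝ≥0∞) : Prop :=
  (∀ b ∈ t, ∀ a ∈ s, ContinuousWithinAt (fun x => op x b) (Set.Iic a) a) ∧
  (∀ a ∈ s, ∀ b ∈ t, ContinuousWithinAt (fun y => op a y) (Set.Iic b) b)

def mRange {X : Type*} [MeasurableSpace X] (m : Set X → ℝ≥0∞) : Set ℝ≥0∞ :=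
  {c | ∃ A : Set X, MeasurableSet A ∧ m A = c}

def MonotoneMeasure {X : Type*} [MeasurableSpace X] (m : Set X → ℝ≥0∞) : Prop :=
  m ∅ = 0 ∧ 0 < m Set.univ ∧
    ∀ ⦃A B : Set X⦄, MeasurableSet A → MeasurableSet B → A ⊆ B → m A ≤ m B

def IsCapacity {X : Type*} [MeasurableSpace X] (m : Set X → ℝ≥0∞) : Prop :=
  m ∅ = 0 ∧ m Set.univ = 1 ∧
    ∀ ⦃A B : Set X⦄, MeasurableSet A → MeasurableSet B → A ⊆ B → m A ≤ m B

def ComonotoneOn {X : Type*} (D : Set X) (f g : X → ℝ≥0∞) : Prop :=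
  ∀ x ∈ D, ∀ y ∈ D, f x < f y → g x ≤ g y

def IsSemicopula (S : ℝ≥0∞ → ℝ≥0∞ → ℝ≥0∞) : Prop :=
  Mono2On S (Set.Iic 1) (Set.Iic 1) ∧
    ∀ a ∈ Set.Iic (1 : ℝ≥0∞), S a 1 = a ∧ S 1 a = a

def MPosDep {X : Type*} (m : Set X → ℝ≥0∞) (tri : ℝ≥0∞ → ℝ≥0∞ → ℝ≥0∞)
    (k : ℝ≥0∞) (A B : Set X) (f g : X → ℝ≥0∞) : Prop :=
  ∀ α ∈ Set.Iic k, ∀ β ∈ Set.Iic k,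
    tri (m (A ∩ {x | α ≤ f x})) (m (B ∩ {x | β ≤ g x})) ≤
      m (A ∩ B ∩ {x | α ≤ f x} ∩ {x | β ≤ g x})

open Filter Topology in
lemma leftlim {g : ℝ≥0∞ → ℝ≥0∞} {x c : ℝ≥0∞} (hx : 0 < x)
    (hg : ContinuousWithinAt g (Set.Iic x) x) (hc : c < g x) :
    ∃ y, y < x ∧ c < g y := by
  have h1 : ∀ᶠ y in 𝓝[Set.Iio x] x, c < g y :=
    (hg.eventually (eventually_gt_nhds hc)).filter_mono
      (nhdsWithin_mono x Set.Iio_subset_Iic_self)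
  have h3 : (𝓝[Set.Iio x] x).NeBot := nhdsWithin_Iio_self_neBot' ⟨0, hx⟩
  have h4 := h1.and (self_mem_nhdsWithin : ∀ᶠ y in 𝓝[Set.Iio x] x, y ∈ Set.Iio x)
  obtain ⟨y, hy1, hy2⟩ := h4.exists
  exact ⟨y, hy2, hy1⟩

lemma level {ybar : ℝ≥0∞} {φ : ℝ≥0∞ → ℝ≥0∞} (hmono : StrictMonoOn φ (Set.Iic ybar))
    (hrc : RightContOn φ (Set.Iic ybar)) {t : ℝ≥0∞}
    (hne : ∃ y, y ≤ ybar ∧ t ≤ φ y) :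
    ∃ a, a ≤ ybar ∧ t ≤ φ a ∧ ∀ y, y ≤ ybar → (t ≤ φ y ↔ a ≤ y) := by
  set T : Set ℝ≥0∞ := {y | y ≤ ybar ∧ t ≤ φ y} with hT
  obtain ⟨w, hw1, hw2⟩ := hne
  have hwT : w ∈ T := ⟨hw1, hw2⟩
  have hTne : T.Nonempty := ⟨w, hwT⟩
  set a := sInf T with ha
  have haw : a ≤ ybar := le_trans (sInf_le hwT) hw1
  have hTsub : T ⊆ Set.Ici a := fun y hy => sInf_le hy
  have haφ : t ≤ φ a := by
    have h1 : a ∈ closure T := (isGLB_sInf T).mem_closure hTne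
    have h2 : ContinuousWithinAt φ T a := (hrc a haw).mono hTsub
    have h3 : φ a ∈ closure (φ '' T) := h2.mem_closure_image h1
    have h4 : φ '' T ⊆ Set.Ici t := by rintro _ ⟨y, hy, rfl⟩; exact hy.2
    have h5 := (closure_mono h4) h3
    rwa [isClosed_Ici.closure_eq] at h5
  refine ⟨a, haw, haφ, fun y hy => ⟨fun h => sInf_le ⟨hy, h⟩,
    fun h => le_trans haφ (hmono.monotoneOn haw hy h)⟩⟩

lemma star_meas {X : Type*} [MeasurableSpace X] {ybar : ℝ≥0∞}
    {star : ℝ≥0∞ → ℝ≥0∞ → ℝ≥0∞}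
    (hmono : Mono2On star (Set.Iic ybar) (Set.Iic ybar))
    (hlc : LeftCont2On star (Set.Iic ybar) (Set.Iic ybar))
    (hle : ∀ a ∈ Set.Iic ybar, ∀ b ∈ Set.Iic ybar, star a b ≤ min a b)
    {f g : X → ℝ≥0∞} (hf : Measurable f) (hg : Measurable g)
    (hfy : ∀ x, f x ≤ ybar) (hgy : ∀ x, g x ≤ ybar) :
    Measurable (fun x => star (f x) (g x)) := by
  have hrep : (fun x => star (f x) (g x)) = fun x =>
      ⨆ (q : ℚ) (r : ℚ), if ((Real.toNNReal q : ℝ≥0∞) < f x ∧ (Real.toNNReal r : ℝ≥0∞) < g x)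
        then star (Real.toNNReal q) (Real.toNNReal r) else 0 := by
    funext x
    apply le_antisymm
    · rcases eq_zero_or_pos (f x) with h0 | hfx
      · calc star (f x) (g x) ≤ min (f x) (g x) := hle _ (hfy x) _ (hgy x)
          _ = 0 := by simp [h0]
          _ ≤ _ := zero_le
      rcases eq_zero_or_pos (g x) with h0 | hgx
      · calc star (f x) (g x) ≤ min (f x) (g x) := hle _ (hfy x) _ (hgy x)
          _ = 0 := by simp [h0]
          _ ≤ _ := zero_le
      refine le_of_forall_lt fun c hc => ?_
      obtain ⟨p, hpf, hcp⟩ := leftlim hfx (hlc.1 (g x) (hgy x) (f x) (hfy x)) hc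
      obtain ⟨q, -, hpq, hqf⟩ := ENNReal.lt_iff_exists_rat_btwn.mp hpf
      have hqy : ((Real.toNNReal q : ℝ≥0∞)) ≤ ybar := le_trans hqf.le (hfy x)
      have hcq : c < star (Real.toNNReal q) (g x) :=
        lt_of_lt_of_le hcp (hmono (le_trans hpf.le (hfy x)) (hgy x) hqy (hgy x) hpq.le le_rfl)
      obtain ⟨p', hpg, hcp'⟩ := leftlim hgx (hlc.2 (Real.toNNReal q) hqy (g x) (hgy x)) hcq
      obtain ⟨r, -, hpr, hrg⟩ := ENNReal.lt_iff_exists_rat_btwn.mp hpg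
      have hry : ((Real.toNNReal r : ℝ≥0∞)) ≤ ybar := le_trans hrg.le (hgy x)
      have hcqr : c < star (Real.toNNReal q) (Real.toNNReal r) :=
        lt_of_lt_of_le hcp' (hmono hqy (le_trans hpg.le (hgy x)) hqy hry le_rfl hpr.le)
      refine lt_of_lt_of_le hcqr ?_
      refine le_trans (le_of_eq ?_) (le_iSup₂_of_le q r le_rfl)
      rw [if_pos ⟨hqf, hrg⟩]
    · refine iSup₂_le fun q r => ?_
      split_ifs with h
      · exact hmono (le_trans h.1.le (hfy x)) (le_trans h.2.le (hgy x)) (hfy x) (hgy x)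
          h.1.le h.2.le
      · exact zero_le
  rw [hrep]
  refine Measurable.iSup fun q => Measurable.iSup fun r => ?_
  exact Measurable.ite ((hf measurableSet_Ioi).inter (hg measurableSet_Ioi))
    measurable_const measurable_const

theorem statement12 {X : Type*} [MeasurableSpace X]
    (ybar : ℝ≥0∞) (hybar : 0 < ybar)
    (m : Set X → ℝ≥0∞) (hm : MonotoneMeasure m)
    (star : ℝ≥0∞ → ℝ≥0∞ → ℝ≥0∞)
    (hstar_maps : ∀ a ∈ Set.Iic ybar, ∀ b ∈ Set.Iic ybar, star a b ∈ Set.Iic ybar)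
    (hstar_mono : Mono2On star (Set.Iic ybar) (Set.Iic ybar))
    (hstar_lc : LeftCont2On star (Set.Iic ybar) (Set.Iic ybar))
    (hstar_le : ∀ a ∈ Set.Iic ybar, ∀ b ∈ Set.Iic ybar, star a b ≤ min a b)
    (φ₁ φ₂ φ₃ ψ₁ ψ₂ ψ₃ : ℝ≥0∞ → ℝ≥0∞)
    (hφ₁_maps : Set.MapsTo φ₁ (Set.Iic ybar) (Set.Iic ybar))
    (hφ₁_mono : MonotoneOn φ₁ (Set.Iic ybar))
    (hφ₂_maps : Set.MapsTo φ₂ (Set.Iic ybar) (Set.Iic ybar))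
    (hφ₂_mono : StrictMonoOn φ₂ (Set.Iic ybar))
    (hφ₂_rc : RightContOn φ₂ (Set.Iic ybar))
    (hφ₃_maps : Set.MapsTo φ₃ (Set.Iic ybar) (Set.Iic ybar))
    (hφ₃_mono : StrictMonoOn φ₃ (Set.Iic ybar))
    (hφ₃_rc : RightContOn φ₃ (Set.Iic ybar))
    (hφ_eq₂ : φ₁ ybar = φ₂ ybar) (hφ_eq₃ : φ₁ ybar = φ₃ ybar)
    (hψ₁_maps : Set.MapsTo ψ₁ (Set.Iic (φ₁ ybar)) (Set.Iic ybar))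
    (hψ₁_mono : MonotoneOn ψ₁ (Set.Iic (φ₁ ybar)))
    (hψ₂_maps : Set.MapsTo ψ₂ (Set.Iic (φ₂ ybar)) (Set.Iic ybar))
    (hψ₂_mono : MonotoneOn ψ₂ (Set.Iic (φ₂ ybar)))
    (hψ₂_lc : LeftContOn ψ₂ (Set.Iic (φ₂ ybar)))
    (hψ₃_maps : Set.MapsTo ψ₃ (Set.Iic (φ₃ ybar)) (Set.Iic ybar))
    (hψ₃_mono : MonotoneOn ψ₃ (Set.Iic (φ₃ ybar)))
    (hψ₃_lc : LeftContOn ψ₃ (Set.Iic (φ₃ ybar)))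
    (hψ₁₂ : ∀ x ∈ Set.Iic (φ₁ ybar), ψ₂ x ≤ ψ₁ x)
    (hψ₁₃ : ∀ x ∈ Set.Iic (φ₁ ybar), ψ₃ x ≤ ψ₁ x)
    (hψφ₂ : ∀ x ∈ Set.Iic ybar, ψ₂ (φ₂ x) ≤ x)
    (hψφ₃ : ∀ x ∈ Set.Iic ybar, ψ₃ (φ₃ x) ≤ x)
    (hψφ₁ : ∀ x ∈ Set.Iic ybar, x ≤ ψ₁ (φ₁ x))
    (A : Set X) (hA : MeasurableSet A)
    (f g : X → ℝ≥0∞) (hf : Measurable f) (hg : Measurable g)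
    (hfy : ∀ x, f x ≤ ybar) (hgy : ∀ x, g x ≤ ybar)
    (hcom : ComonotoneOn A f g) :
    star (ψ₂ (uSugeno ybar (fun a b => min a b) m A fun x => φ₂ (f x)))
         (ψ₃ (uSugeno ybar (fun a b => min a b) m A fun x => φ₃ (g x)))
      ≤ ψ₁ (uSugeno ybar (fun a b => min a b) m A fun x => φ₁ (star (f x) (g x))) := by
  set h : X → ℝ≥0∞ := fun x => star (f x) (g x) with hh
  have hhy : ∀ x, h x ≤ ybar := fun x =>
    le_trans (hstar_le _ (hfy x) _ (hgy x)) (le_trans (min_le_left _ _) (hfy x))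
  have hmeas_h : Measurable h := star_meas hstar_mono hstar_lc hstar_le hf hg hfy hgy
  have hφ₁y : φ₁ ybar ≤ ybar := hφ₁_maps (Set.mem_Iic.mpr le_rfl)
  set S₁ := uSugeno ybar (fun a b => min a b) m A (fun x => φ₁ (h x)) with hS₁def
  set S₂ := uSugeno ybar (fun a b => min a b) m A (fun x => φ₂ (f x)) with hS₂def
  set S₃ := uSugeno ybar (fun a b => min a b) m A (fun x => φ₃ (g x)) with hS₃def
  have hS₁e : S₁ = ⨆ t ∈ Set.Iic ybar, min t (m (A ∩ {x | t ≤ φ₁ (h x)})) := rfl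
  have hS₂e : S₂ = ⨆ t ∈ Set.Iic ybar, min t (m (A ∩ {x | t ≤ φ₂ (f x)})) := rfl
  have hS₃e : S₃ = ⨆ t ∈ Set.Iic ybar, min t (m (A ∩ {x | t ≤ φ₃ (g x)})) := rfl
  -- upper bounds on the integrals
  have hbound : ∀ (φ : ℝ≥0∞ → ℝ≥0∞) (F : X → ℝ≥0∞), MonotoneOn φ (Set.Iic ybar) →
      (∀ x, F x ≤ ybar) →
      (⨆ t ∈ Set.Iic ybar, min t (m (A ∩ {x | t ≤ φ (F x)}))) ≤ φ ybar := by
    intro φ F hmono hFy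
    refine iSup₂_le fun t ht => ?_
    by_cases h' : t ≤ φ ybar
    · exact (min_le_left _ _).trans h'
    · push_neg at h'
      have he : A ∩ {x | t ≤ φ (F x)} = ∅ := by
        ext x
        simp only [Set.mem_inter_iff, Set.mem_setOf_eq, Set.mem_empty_iff_false, iff_false,
          not_and]
        intro _ hx
        exact absurd (hx.trans (hmono (hFy x) (Set.mem_Iic.mpr le_rfl) (hFy x))) (not_le.mpr h')
      rw [he, hm.1]
      simp
  have hS₁le : S₁ ≤ φ₁ ybar := hbound φ₁ h hφ₁_mono hhy
  have hS₂le : S₂ ≤ φ₂ ybar := hbound φ₂ f hφ₂_mono.monotoneOn hfy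
  have hS₃le : S₃ ≤ φ₃ ybar := hbound φ₃ g hφ₃_mono.monotoneOn hgy
  have hS₁m : S₁ ∈ Set.Iic (φ₁ ybar) := Set.mem_Iic.mpr hS₁le
  -- the core inequality
  have hcore : ∀ c₂, c₂ < S₂ → ∀ c₃, c₃ < S₃ → star (ψ₂ c₂) (ψ₃ c₃) ≤ ψ₁ S₁ := by
    intro c₂ hc₂ c₃ hc₃
    have hc₂m : c₂ ∈ Set.Iic (φ₂ ybar) := Set.mem_Iic.mpr (hc₂.le.trans hS₂le)
    have hc₃m : c₃ ∈ Set.Iic (φ₃ ybar) := Set.mem_Iic.mpr (hc₃.le.trans hS₃le)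
    have hc₂m1 : c₂ ∈ Set.Iic (φ₁ ybar) := by rw [hφ_eq₂]; exact hc₂m
    have hc₃m1 : c₃ ∈ Set.Iic (φ₁ ybar) := by rw [hφ_eq₃]; exact hc₃m
    rw [hS₂e] at hc₂
    rw [hS₃e] at hc₃
    simp only [lt_iSup_iff, lt_min_iff, Set.mem_Iic] at hc₂ hc₃
    obtain ⟨t₂, ht₂y, hc2t, hc2m⟩ := hc₂
    obtain ⟨t₃, ht₃y, hc3t, hc3m⟩ := hc₃
    -- invert levels
    have hne₂ : ∃ y, y ≤ ybar ∧ t₂ ≤ φ₂ y := by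
      by_contra hcon
      push_neg at hcon
      have he : A ∩ {x | t₂ ≤ φ₂ (f x)} = ∅ := by
        ext x
        simp only [Set.mem_inter_iff, Set.mem_setOf_eq, Set.mem_empty_iff_false, iff_false,
          not_and]
        exact fun _ hx => absurd hx (not_le.mpr (hcon (f x) (hfy x)))
      rw [he, hm.1] at hc2m
      exact absurd hc2m (by simp)
    have hne₃ : ∃ y, y ≤ ybar ∧ t₃ ≤ φ₃ y := by
      by_contra hcon
      push_neg at hcon
      have he : A ∩ {x | t₃ ≤ φ₃ (g x)} = ∅ := by
        ext x
        simp only [Set.mem_inter_iff, Set.mem_setOf_eq, Set.mem_empty_iff_false, iff_false,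
          not_and]
        exact fun _ hx => absurd hx (not_le.mpr (hcon (g x) (hgy x)))
      rw [he, hm.1] at hc3m
      exact absurd hc3m (by simp)
    obtain ⟨a₂, ha₂y, ha₂φ, ha₂iff⟩ := level hφ₂_mono hφ₂_rc hne₂
    obtain ⟨a₃, ha₃y, ha₃φ, ha₃iff⟩ := level hφ₃_mono hφ₃_rc hne₃
    have hset₂ : {x | t₂ ≤ φ₂ (f x)} = {x | a₂ ≤ f x} := by
      ext x; exact ha₂iff (f x) (hfy x)
    have hset₃ : {x | t₃ ≤ φ₃ (g x)} = {x | a₃ ≤ g x} := by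
      ext x; exact ha₃iff (g x) (hgy x)
    rw [hset₂] at hc2m
    rw [hset₃] at hc3m
    have hψc₂ : ψ₂ c₂ ≤ a₂ :=
      le_trans (hψ₂_mono hc₂m (Set.mem_Iic.mpr (hφ₂_mono.monotoneOn ha₂y
        (Set.mem_Iic.mpr le_rfl) ha₂y)) (hc2t.le.trans ha₂φ)) (hψφ₂ a₂ ha₂y)
    have hψc₃ : ψ₃ c₃ ≤ a₃ :=
      le_trans (hψ₃_mono hc₃m (Set.mem_Iic.mpr (hφ₃_mono.monotoneOn ha₃y
        (Set.mem_Iic.mpr le_rfl) ha₃y)) (hc3t.le.trans ha₃φ)) (hψφ₃ a₃ ha₃y)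
    set E₂ := A ∩ {x | a₂ ≤ f x} with hE₂
    set E₃ := A ∩ {x | a₃ ≤ g x} with hE₃
    set E := E₂ ∩ E₃ with hE
    have hME₂ : MeasurableSet E₂ := hA.inter (hf measurableSet_Ici)
    have hME₃ : MeasurableSet E₃ := hA.inter (hg measurableSet_Ici)
    have hME : MeasurableSet E := hME₂.inter hME₃
    have hnest : E = E₂ ∨ E = E₃ := by
      by_cases hss : E₂ ⊆ E₃
      · exact Or.inl (Set.inter_eq_left.mpr hss)
      · refine Or.inr (Set.inter_eq_right.mpr fun x hx => ?_)
        obtain ⟨z, hz₂, hz₃⟩ := Set.not_subset.mp hss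
        have hzg : g z < a₃ := by
          by_contra hcz
          exact hz₃ ⟨hz₂.1, not_lt.mp hcz⟩
        refine ⟨hx.1, ?_⟩
        by_contra hfx
        simp only [Set.mem_setOf_eq, not_le] at hfx
        have hgle := hcom x hx.1 z hz₂.1 (lt_of_lt_of_le hfx hz₂.2)
        exact absurd (le_trans hx.2 hgle) (not_le.mpr hzg)
    have hmE : c₂ < m E ∨ c₃ < m E := by
      rcases hnest with hq | hq
      · exact Or.inl (by rw [hq]; exact hc2m)
      · exact Or.inr (by rw [hq]; exact hc3m)
    have hsta : star a₂ a₃ ≤ ybar := hstar_maps a₂ ha₂y a₃ ha₃y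
    set t' := φ₁ (star a₂ a₃) with ht'
    have ht'le : t' ≤ φ₁ ybar := hφ₁_mono (Set.mem_Iic.mpr hsta) (Set.mem_Iic.mpr le_rfl) hsta
    set u := min t' (m E) with hu
    have hEsub : E ⊆ A ∩ {x | u ≤ φ₁ (h x)} := by
      intro x hx
      refine ⟨hx.1.1, ?_⟩
      have h1 : star a₂ a₃ ≤ h x :=
        hstar_mono ha₂y ha₃y (hfy x) (hgy x) hx.1.2 hx.2.2
      exact le_trans (min_le_left _ _) (hφ₁_mono (Set.mem_Iic.mpr hsta)
        (Set.mem_Iic.mpr (hhy x)) h1)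
    -- measurability of the star-level set
    have hBmeas : MeasurableSet {x | u ≤ φ₁ (h x)} := by
      set W : Set ℝ≥0∞ := {y | (y ≤ ybar ∧ u ≤ φ₁ y) ∨ ybar < y} with hW
      have hUW : IsUpperSet W := by
        intro y₁ y₂ h12 hy₁
        rcases hy₁ with ⟨hy1, hy2⟩ | hy
        · by_cases h2 : y₂ ≤ ybar
          · exact Or.inl ⟨h2, le_trans hy2 (hφ₁_mono (Set.mem_Iic.mpr hy1)
              (Set.mem_Iic.mpr h2) h12)⟩
          · exact Or.inr (not_le.mp h2)
        · exact Or.inr (lt_of_lt_of_le hy h12)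
      have hWe : {x | u ≤ φ₁ (h x)} = h ⁻¹' W := by
        ext x
        simp only [Set.mem_setOf_eq, Set.mem_preimage, hW]
        constructor
        · intro hx; exact Or.inl ⟨hhy x, hx⟩
        · rintro (⟨-, hx⟩ | hx)
          · exact hx
          · exact absurd (hhy x) (not_le.mpr hx)
      rw [hWe]
      exact hmeas_h hUW.ordConnected.measurableSet
    have hmB : m E ≤ m (A ∩ {x | u ≤ φ₁ (h x)}) :=
      hm.2.2 hME (hA.inter hBmeas) hEsub
    have huy : u ≤ ybar := le_trans (min_le_left _ _) (ht'le.trans hφ₁y)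
    have huS₁ : u ≤ S₁ := by
      rw [hS₁e]
      refine le_trans ?_ (le_iSup₂_of_le u (Set.mem_Iic.mpr huy) le_rfl)
      exact le_min le_rfl (le_trans (min_le_right _ _) hmB)
    rcases le_or_gt t' (m E) with hcase | hcase
    · have hut : u = t' := min_eq_left hcase
      have h1 : star (ψ₂ c₂) (ψ₃ c₃) ≤ star a₂ a₃ :=
        hstar_mono (hψ₂_maps hc₂m) (hψ₃_maps hc₃m) ha₂y ha₃y hψc₂ hψc₃
      have h2 : star a₂ a₃ ≤ ψ₁ t' := hψφ₁ _ hsta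
      have h3 : ψ₁ t' ≤ ψ₁ S₁ :=
        hψ₁_mono (Set.mem_Iic.mpr ht'le) hS₁m (hut ▸ huS₁)
      exact h1.trans (h2.trans h3)
    · have hut : u = m E := min_eq_right hcase.le
      rcases hmE with hc | hc
      · calc star (ψ₂ c₂) (ψ₃ c₃) ≤ min (ψ₂ c₂) (ψ₃ c₃) :=
              hstar_le _ (hψ₂_maps hc₂m) _ (hψ₃_maps hc₃m)
          _ ≤ ψ₂ c₂ := min_le_left _ _
          _ ≤ ψ₁ c₂ := hψ₁₂ c₂ hc₂m1
          _ ≤ ψ₁ S₁ := hψ₁_mono hc₂m1 hS₁m (le_trans hc.le (hut ▸ huS₁))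
      · calc star (ψ₂ c₂) (ψ₃ c₃) ≤ min (ψ₂ c₂) (ψ₃ c₃) :=
              hstar_le _ (hψ₂_maps hc₂m) _ (hψ₃_maps hc₃m)
          _ ≤ ψ₃ c₃ := min_le_right _ _
          _ ≤ ψ₁ c₃ := hψ₁₃ c₃ hc₃m1
          _ ≤ ψ₁ S₁ := hψ₁_mono hc₃m1 hS₁m (le_trans hc.le (hut ▸ huS₁))
  -- reduction via left continuity
  have hPy : ψ₂ S₂ ≤ ybar := hψ₂_maps (Set.mem_Iic.mpr hS₂le)
  have hQy : ψ₃ S₃ ≤ ybar := hψ₃_maps (Set.mem_Iic.mpr hS₃le)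
  have hz₁ : (0 : ℝ≥0∞) ∈ Set.Iic (φ₁ ybar) := Set.mem_Iic.mpr (zero_le)
  rcases eq_zero_or_pos S₂ with h2z | h2p
  · calc star (ψ₂ S₂) (ψ₃ S₃) ≤ min (ψ₂ S₂) (ψ₃ S₃) := hstar_le _ hPy _ hQy
      _ ≤ ψ₂ S₂ := min_le_left _ _
      _ = ψ₂ 0 := by rw [h2z]
      _ ≤ ψ₁ 0 := hψ₁₂ 0 hz₁
      _ ≤ ψ₁ S₁ := hψ₁_mono hz₁ hS₁m (zero_le)
  rcases eq_zero_or_pos S₃ with h3z | h3p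
  · calc star (ψ₂ S₂) (ψ₃ S₃) ≤ min (ψ₂ S₂) (ψ₃ S₃) := hstar_le _ hPy _ hQy
      _ ≤ ψ₃ S₃ := min_le_right _ _
      _ = ψ₃ 0 := by rw [h3z]
      _ ≤ ψ₁ 0 := hψ₁₃ 0 hz₁
      _ ≤ ψ₁ S₁ := hψ₁_mono hz₁ hS₁m (zero_le)
  rcases eq_zero_or_pos (ψ₂ S₂) with hPz | hPp
  · calc star (ψ₂ S₂) (ψ₃ S₃) ≤ min (ψ₂ S₂) (ψ₃ S₃) := hstar_le _ hPy _ hQy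
      _ ≤ ψ₂ S₂ := min_le_left _ _
      _ = 0 := hPz
      _ ≤ _ := zero_le
  rcases eq_zero_or_pos (ψ₃ S₃) with hQz | hQp
  · calc star (ψ₂ S₂) (ψ₃ S₃) ≤ min (ψ₂ S₂) (ψ₃ S₃) := hstar_le _ hPy _ hQy
      _ ≤ ψ₃ S₃ := min_le_right _ _
      _ = 0 := hQz
      _ ≤ _ := zero_le
  refine le_of_forall_lt fun r hr => ?_
  obtain ⟨p, hpP, hrp⟩ := leftlim hPp (hstar_lc.1 (ψ₃ S₃) (Set.mem_Iic.mpr hQy)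
    (ψ₂ S₂) (Set.mem_Iic.mpr hPy)) hr
  obtain ⟨c₂, hc₂S, hpc₂⟩ := leftlim h2p (hψ₂_lc S₂ (Set.mem_Iic.mpr hS₂le)) hpP
  have hc₂m : c₂ ∈ Set.Iic (φ₂ ybar) := Set.mem_Iic.mpr (hc₂S.le.trans hS₂le)
  have hr2 : r < star (ψ₂ c₂) (ψ₃ S₃) :=
    hrp.trans_le (hstar_mono (Set.mem_Iic.mpr (hpP.le.trans hPy)) (Set.mem_Iic.mpr hQy)
      (hψ₂_maps hc₂m) (Set.mem_Iic.mpr hQy) hpc₂.le le_rfl)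
  obtain ⟨q, hqQ, hrq⟩ := leftlim hQp (hstar_lc.2 (ψ₂ c₂) (hψ₂_maps hc₂m)
    (ψ₃ S₃) (Set.mem_Iic.mpr hQy)) hr2
  obtain ⟨c₃, hc₃S, hqc₃⟩ := leftlim h3p (hψ₃_lc S₃ (Set.mem_Iic.mpr hS₃le)) hqQ
  have hc₃m : c₃ ∈ Set.Iic (φ₃ ybar) := Set.mem_Iic.mpr (hc₃S.le.trans hS₃le)
  have hr3 : r < star (ψ₂ c₂) (ψ₃ c₃) :=
    hrq.trans_le (hstar_mono (hψ₂_maps hc₂m) (Set.mem_Iic.mpr (hqQ.le.trans hQy))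
      (hψ₂_maps hc₂m) (hψ₃_maps hc₃m) le_rfl hqc₃.le)
  exact hr3.trans_le (hcore c₂ hc₂S c₃ hc₃S)
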